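/- Let A, B be n×n complex matrices such that the commutator AB − BA has rank 1. Then A and B are simultaneously triangularizable. -/

import Mathlib

open Matrix Module

section Laffey


lemma common_eigenvector : ∀ (d : ℕ) (V : Type) [AddCommGroup V] [Module ℂ V]
    [FiniteDimensional ℂ V] [Nontrivial V], Module.finrank ℂ V ≤ d →
    ∀ f g : Module.End ℂ V, Module.finrank ℂ (LinearMap.range (f * g - g * f)) ≤ 1 →
    ∃ (v : V) (μ ν : ℂ), v ≠ 0 ∧ f v = μ • v ∧ g v = ν • v := by
  intro d
  induction d with
  | zero =>
    intro V _ _ _ _ hd f g _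
    have := Module.finrank_pos (R := ℂ) (M := V)
    omega
  | succ d ih =>
    intro V _ _ _ _ hd f g hrank
    set c : Module.End ℂ V := f * g - g * f with hc
    obtain ⟨μ, hμ⟩ := Module.End.exists_eigenvalue f
    by_cases h1 : ∀ y, f y = μ • y → c y = 0
    · -- eigenspace of f is g-invariant
      set E := f.eigenspace μ with hE
      have hgE : ∀ y ∈ E, g y ∈ E := by
        intro y hy
        rw [Module.End.mem_eigenspace_iff] at hy ⊢
        have hcy : c y = 0 := h1 y hy
        have h0 : f (g y) - g (f y) = 0 := by
          simpa [hc, LinearMap.sub_apply, Module.End.mul_apply] using hcy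
        have h2 : f (g y) = g (f y) := by linear_combination (norm := module) h0
        rw [h2, hy, _root_.map_smul]
      obtain ⟨x0, hx0⟩ := hμ.exists_hasEigenvector
      have : Nontrivial E :=
        nontrivial_of_ne ⟨x0, hx0.1⟩ 0 (fun hh => hx0.2 (by simpa using congrArg Subtype.val hh))
      set gE : Module.End ℂ E := g.restrict hgE with hgEdef
      obtain ⟨ν, hν⟩ := Module.End.exists_eigenvalue gE
      obtain ⟨w, hw⟩ := hν.exists_hasEigenvector
      refine ⟨(w : V), μ, ν, fun hh => hw.2 (Subtype.ext hh), ?_, ?_⟩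
      · exact Module.End.mem_eigenspace_iff.mp w.2
      · have h3 : gE w = ν • w := Module.End.mem_eigenspace_iff.mp hw.1
        have h4 : (gE w : V) = ν • (w : V) := by rw [h3]; rfl
        rw [← h4, hgEdef, LinearMap.restrict_coe_apply]
    · push_neg at h1
      obtain ⟨x, hx, hcx⟩ := h1
      set W := LinearMap.range (f - μ • (1 : Module.End ℂ V)) with hW
      have hfmu : ∀ z, (f - μ • (1 : Module.End ℂ V)) z = f z - μ • z := by
        intro z; simp
      have hfW : ∀ y ∈ W, f y ∈ W := by
        rintro y ⟨z, rfl⟩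
        refine ⟨f z, ?_⟩
        rw [hfmu, hfmu, map_sub, _root_.map_smul]
      have hcxW : c x ∈ W := by
        refine ⟨g x, ?_⟩
        rw [hfmu]
        simp only [hc, LinearMap.sub_apply, Module.End.mul_apply]
        rw [hx, _root_.map_smul]
      have hrange : LinearMap.range c ≤ W := by
        have hle : (ℂ ∙ (c x)) ≤ LinearMap.range c :=
          (Submodule.span_singleton_le_iff_mem _ _).mpr ⟨x, rfl⟩
        have heq : LinearMap.range c = ℂ ∙ (c x) := by
          refine (Submodule.eq_of_le_of_finrank_le hle ?_).symm
          rw [finrank_span_singleton hcx]; exact hrank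
        rw [heq]
        exact (Submodule.span_singleton_le_iff_mem _ _).mpr hcxW
      have hgW : ∀ y ∈ W, g y ∈ W := by
        rintro y ⟨z, rfl⟩
        have key : g ((f - μ • (1 : Module.End ℂ V)) z)
            = (f - μ • (1 : Module.End ℂ V)) (g z) - c z := by
          rw [hfmu, hfmu]
          simp only [hc, LinearMap.sub_apply, Module.End.mul_apply, map_sub, _root_.map_smul]
          abel
        rw [key]
        exact Submodule.sub_mem _ ⟨g z, rfl⟩ (hrange ⟨z, rfl⟩)
      have hxne : x ≠ 0 := fun h => hcx (by rw [h, map_zero])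
      have hWneTop : W ≠ ⊤ := by
        intro htop
        have hsurj : Function.Surjective (f - μ • (1 : Module.End ℂ V)) :=
          LinearMap.range_eq_top.mp htop
        have hinj : Function.Injective (f - μ • (1 : Module.End ℂ V)) :=
          (LinearMap.injective_iff_surjective).mpr hsurj
        have hx0 : (f - μ • (1 : Module.End ℂ V)) x = 0 := by
          rw [hfmu, hx, sub_self]
        exact hxne (hinj (by rw [hx0, map_zero]))
      have hWlt : Module.finrank ℂ W < Module.finrank ℂ V :=
        Submodule.finrank_lt hWneTop
      have hWnt : Nontrivial W :=
        nontrivial_of_ne ⟨c x, hcxW⟩ 0 (fun hh => hcx (by simpa using congrArg Subtype.val hh))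
      set fr : Module.End ℂ W := f.restrict hfW with hfr
      set gr : Module.End ℂ W := g.restrict hgW with hgr
      set cr : Module.End ℂ W := fr * gr - gr * fr with hcr
      have hcr_coe : ∀ w : W, (cr w : V) = c (w : V) := by
        intro w
        simp [hcr, hc, hfr, hgr, LinearMap.sub_apply, Module.End.mul_apply,
          LinearMap.restrict_coe_apply]
      have hcrrank : Module.finrank ℂ (LinearMap.range cr) ≤ 1 := by
        have hmap : (LinearMap.range cr).map W.subtype ≤ LinearMap.range c := by
          rintro y ⟨w, ⟨u, rfl⟩, rfl⟩
          exact ⟨(u : V), (hcr_coe u).symm⟩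
        calc Module.finrank ℂ (LinearMap.range cr)
            = Module.finrank ℂ ((LinearMap.range cr).map W.subtype) :=
              (Submodule.finrank_map_subtype_eq W _).symm
          _ ≤ Module.finrank ℂ (LinearMap.range c) := Submodule.finrank_mono hmap
          _ ≤ 1 := hrank
      obtain ⟨v, μ', ν', hv0, hfv, hgv⟩ := ih W (by omega) fr gr hcrrank
      refine ⟨(v : V), μ', ν', fun hh => hv0 (Subtype.ext hh), ?_, ?_⟩
      · have h4 : (fr v : V) = μ' • (v : V) := by rw [hfv]; rfl
        rw [← h4, hfr, LinearMap.restrict_coe_apply]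
      · have h4 : (gr v : V) = ν' • (v : V) := by rw [hgv]; rfl
        rw [← h4, hgr, LinearMap.restrict_coe_apply]

namespace Laffey

variable {n : ℕ}

/-- Extend an `n×n` matrix to `(n+1)×(n+1)` by putting a `1` in the top-left corner. -/
def emb (R : Matrix (Fin n) (Fin n) ℂ) : Matrix (Fin (n+1)) (Fin (n+1)) ℂ :=
  Matrix.of (Fin.cases (Pi.single 0 1) (fun i => Fin.cases 0 (fun j => R i j)))

@[simp] lemma emb_zero_zero (R : Matrix (Fin n) (Fin n) ℂ) : emb R 0 0 = 1 := by
  simp [emb]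

@[simp] lemma emb_zero_succ (R : Matrix (Fin n) (Fin n) ℂ) (j : Fin n) :
    emb R 0 j.succ = 0 := by
  simp [emb, Pi.single_eq_of_ne (Fin.succ_ne_zero j)]

@[simp] lemma emb_succ_zero (R : Matrix (Fin n) (Fin n) ℂ) (i : Fin n) :
    emb R i.succ 0 = 0 := by
  simp [emb]

@[simp] lemma emb_succ_succ (R : Matrix (Fin n) (Fin n) ℂ) (i j : Fin n) :
    emb R i.succ j.succ = R i j := by
  simp [emb]

lemma emb_mul (R S : Matrix (Fin n) (Fin n) ℂ) : emb R * emb S = emb (R * S) := by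
  ext i j
  rw [Matrix.mul_apply]
  cases i using Fin.cases with
  | zero =>
    cases j using Fin.cases with
    | zero => simp [Fin.sum_univ_succ]
    | succ j => simp [Fin.sum_univ_succ]
  | succ i =>
    cases j using Fin.cases with
    | zero => simp [Fin.sum_univ_succ]
    | succ j => simp [Fin.sum_univ_succ, Matrix.mul_apply]

lemma emb_one : emb (1 : Matrix (Fin n) (Fin n) ℂ) = 1 := by
  ext i j
  cases i using Fin.cases with
  | zero =>
    cases j using Fin.cases with
    | zero => simp
    | succ j => simp [Matrix.one_apply, (Fin.succ_ne_zero j).symm]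
  | succ i =>
    cases j using Fin.cases with
    | zero => simp [Matrix.one_apply, Fin.succ_ne_zero i]
    | succ j => simp [Matrix.one_apply, Fin.succ_inj]

lemma emb_mul_emb_inv {R : Matrix (Fin n) (Fin n) ℂ} (hR : IsUnit R) :
    emb R * emb R⁻¹ = 1 := by
  rw [emb_mul, Matrix.mul_nonsing_inv _ ((Matrix.isUnit_iff_isUnit_det R).mp hR), emb_one]

lemma emb_inv_mul_emb {R : Matrix (Fin n) (Fin n) ℂ} (hR : IsUnit R) :
    emb R⁻¹ * emb R = 1 := by
  rw [emb_mul, Matrix.nonsing_inv_mul _ ((Matrix.isUnit_iff_isUnit_det R).mp hR), emb_one]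

lemma isUnit_emb {R : Matrix (Fin n) (Fin n) ℂ} (hR : IsUnit R) : IsUnit (emb R) :=
  ⟨⟨emb R, emb R⁻¹, emb_mul_emb_inv hR, emb_inv_mul_emb hR⟩, rfl⟩

lemma inv_emb {R : Matrix (Fin n) (Fin n) ℂ} (hR : IsUnit R) : (emb R)⁻¹ = emb R⁻¹ :=
  Matrix.inv_eq_right_inv (emb_mul_emb_inv hR)

lemma rank_submatrix_succ_le (M : Matrix (Fin (n+1)) (Fin (n+1)) ℂ) :
    (M.submatrix Fin.succ Fin.succ).rank ≤ M.rank := by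
  classical
  let J : (Fin n → ℂ) →ₗ[ℂ] (Fin (n+1) → ℂ) :=
    { toFun := fun x => Fin.cases 0 x
      map_add' := by intro a b; funext i; cases i using Fin.cases <;> simp
      map_smul' := by intro t a; funext i; cases i using Fin.cases <;> simp }
  have hfact : (M.submatrix Fin.succ Fin.succ).mulVecLin
      = (LinearMap.funLeft ℂ ℂ Fin.succ).comp (M.mulVecLin.comp J) := by
    refine LinearMap.ext fun x => funext fun i => ?_
    simp [Matrix.mulVecLin_apply, Matrix.mulVec, dotProduct, LinearMap.funLeft,
      Fin.sum_univ_succ, J]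
  rw [Matrix.rank, Matrix.rank, hfact, LinearMap.range_comp]
  calc Module.finrank ℂ ((LinearMap.range (M.mulVecLin.comp J)).map (LinearMap.funLeft ℂ ℂ Fin.succ))
      ≤ Module.finrank ℂ (LinearMap.range (M.mulVecLin.comp J)) :=
        Submodule.finrank_map_le _ _
    _ ≤ Module.finrank ℂ (LinearMap.range M.mulVecLin) :=
        Submodule.finrank_mono (LinearMap.range_comp_le_range _ _)

lemma exists_unit_col (v : Fin (n+1) → ℂ) (hv : v ≠ 0) :
    ∃ Q : Matrix (Fin (n+1)) (Fin (n+1)) ℂ, IsUnit Q ∧ ∀ i, Q i 0 = v i := by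
  classical
  obtain ⟨k, hk⟩ : ∃ k, v k ≠ 0 := by
    by_contra hco
    push_neg at hco
    exact hv (funext hco)
  set σ := Equiv.swap (0 : Fin (n+1)) k with hσ
  set Q := Matrix.of (fun i j : Fin (n+1) => if j = 0 then v i else if i = σ j then 1 else 0)
    with hQdef
  have hcol : ∀ i, Q i 0 = v i := by intro i; simp [hQdef]
  have hker : ¬∃ x, x ≠ 0 ∧ Q *ᵥ x = 0 := by
    rintro ⟨x, hx0, hxv⟩
    have hmv : ∀ i, (Q *ᵥ x) i
        = v i * x 0 + ∑ j : Fin n, (if i = σ j.succ then 1 else 0) * x j.succ := by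
      intro i
      rw [Matrix.mulVec, dotProduct, Fin.sum_univ_succ]
      have e0 : Q i 0 = v i := hcol i
      have es : ∀ j : Fin n, Q i j.succ = if i = σ j.succ then 1 else 0 := by
        intro j; simp [hQdef, Fin.succ_ne_zero j]
      rw [e0]
      exact congrArg _ (Finset.sum_congr rfl fun j _ => by rw [es j])
    have hx00 : x 0 = 0 := by
      have h1 := congrFun hxv k
      rw [hmv k] at h1
      have h2 : ∀ j : Fin n, (if k = σ j.succ then (1:ℂ) else 0) * x j.succ = 0 := by
        intro j
        have : k ≠ σ j.succ := by
          intro he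
          have : σ k = j.succ := by rw [he, Equiv.swap_apply_self]
          rw [hσ, Equiv.swap_apply_right] at this
          exact (Fin.succ_ne_zero j) this.symm
        simp [this]
      rw [Finset.sum_congr rfl (fun j _ => h2 j), Finset.sum_const_zero, add_zero] at h1
      exact (mul_eq_zero.mp h1).resolve_left hk
    have hxsucc : ∀ j : Fin n, x j.succ = 0 := by
      intro j
      have h1 := congrFun hxv (σ j.succ)
      rw [hmv (σ j.succ), hx00, mul_zero, zero_add] at h1
      rw [Finset.sum_eq_single j (fun b _ hb => by
          have hne : σ j.succ ≠ σ b.succ :=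
            fun h => hb (Fin.succ_injective _ (σ.injective h)).symm
          rw [if_neg hne, zero_mul]) (fun hj => absurd (Finset.mem_univ j) hj)] at h1
      simpa using h1
    apply hx0
    funext i
    cases i using Fin.cases with
    | zero => exact hx00
    | succ i => exact hxsucc i
  have hdet : Q.det ≠ 0 := by
    intro h0
    exact hker ((Matrix.exists_mulVec_eq_zero_iff).mpr h0)
  exact ⟨Q, (Matrix.isUnit_iff_isUnit_det Q).mpr (isUnit_iff_ne_zero.mpr hdet), hcol⟩


lemma mul_emb_succ_zero (M : Matrix (Fin (n+1)) (Fin (n+1)) ℂ)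
    (R S : Matrix (Fin n) (Fin n) ℂ) (hcol : ∀ i : Fin n, M i.succ 0 = 0) (i : Fin n) :
    (emb S * M * emb R) i.succ 0 = 0 := by
  rw [Matrix.mul_apply]
  have h1 : ∀ l : Fin (n+1), (emb S * M) i.succ l * emb R l 0 = 0 ∨ l = 0 := by
    intro l
    cases l using Fin.cases with
    | zero => exact Or.inr rfl
    | succ l => exact Or.inl (by simp)
  rw [Fin.sum_univ_succ]
  have h2 : (emb S * M) i.succ 0 = 0 := by
    rw [Matrix.mul_apply, Fin.sum_univ_succ]
    simp [hcol]
  simp [h2]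

lemma mul_emb_succ_succ (M : Matrix (Fin (n+1)) (Fin (n+1)) ℂ)
    (R S : Matrix (Fin n) (Fin n) ℂ) (i j : Fin n) :
    (emb S * M * emb R) i.succ j.succ
      = (S * (M.submatrix Fin.succ Fin.succ) * R) i j := by
  rw [Matrix.mul_apply, Matrix.mul_apply, Fin.sum_univ_succ]
  simp only [emb_zero_succ, mul_zero, zero_add, emb_succ_succ]
  refine Finset.sum_congr rfl fun l _ => ?_
  congr 1
  rw [Matrix.mul_apply, Matrix.mul_apply, Fin.sum_univ_succ]
  simp [Matrix.submatrix_apply]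

lemma tri_step (M : Matrix (Fin (n+1)) (Fin (n+1)) ℂ) (R S : Matrix (Fin n) (Fin n) ℂ)
    (hcol : ∀ i : Fin n, M i.succ 0 = 0)
    (htri : BlockTriangular (S * (M.submatrix Fin.succ Fin.succ) * R) id) :
    BlockTriangular (emb S * M * emb R) id := by
  intro i j hij
  cases i using Fin.cases with
  | zero => exact absurd hij (by simp)
  | succ i =>
    cases j using Fin.cases with
    | zero => exact mul_emb_succ_zero M R S hcol i
    | succ j =>
      rw [mul_emb_succ_succ]
      exact htri (by simpa [Fin.succ_lt_succ_iff] using hij)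


lemma mul_submatrix_succ (M N : Matrix (Fin (n+1)) (Fin (n+1)) ℂ)
    (hM : ∀ i : Fin n, M i.succ 0 = 0) :
    (M.submatrix Fin.succ Fin.succ) * (N.submatrix Fin.succ Fin.succ)
      = (M * N).submatrix Fin.succ Fin.succ := by
  ext i j
  rw [Matrix.mul_apply, Matrix.submatrix_apply, Matrix.mul_apply, Fin.sum_univ_succ,
    hM i, zero_mul, zero_add]
  exact Finset.sum_congr rfl fun k _ => rfl

lemma aux : ∀ (n : ℕ) (A B : Matrix (Fin n) (Fin n) ℂ), (A * B - B * A).rank ≤ 1 →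
    ∃ P : Matrix (Fin n) (Fin n) ℂ, IsUnit P ∧
      (P⁻¹ * A * P).BlockTriangular id ∧ (P⁻¹ * B * P).BlockTriangular id := by
  intro n
  induction n with
  | zero =>
    intro A B _
    exact ⟨1, isUnit_one, fun i j _ => i.elim0, fun i j _ => i.elim0⟩
  | succ m ihm =>
    intro A B hAB
    -- step 1: common eigenvector
    have hml : A.mulVecLin * B.mulVecLin - B.mulVecLin * A.mulVecLin
        = (A * B - B * A).mulVecLin := by
      refine LinearMap.ext fun x => ?_
      simp [Matrix.mulVecLin_apply, Matrix.sub_mulVec, ← Matrix.mulVec_mulVec]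
    have hrk : Module.finrank ℂ (LinearMap.range
        (A.mulVecLin * B.mulVecLin - B.mulVecLin * A.mulVecLin)) ≤ 1 := by
      rw [hml]; exact hAB
    obtain ⟨v, μ, ν, hv0, hAv, hBv⟩ := common_eigenvector (m+1) (Fin (m+1) → ℂ)
      (by simp) A.mulVecLin B.mulVecLin hrk
    rw [Matrix.mulVecLin_apply] at hAv hBv
    -- step 2: change of basis sending e₀ to v
    obtain ⟨Q, hQ, hQcol⟩ := exists_unit_col v hv0
    have hQdet : IsUnit Q.det := (Matrix.isUnit_iff_isUnit_det Q).mp hQ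
    have hQQ : Q * Q⁻¹ = 1 := Matrix.mul_nonsing_inv _ hQdet
    have hQQ' : Q⁻¹ * Q = 1 := Matrix.nonsing_inv_mul _ hQdet
    set A' := Q⁻¹ * A * Q with hA'
    set B' := Q⁻¹ * B * Q with hB'
    have hQe : Q *ᵥ Pi.single 0 1 = v := by
      funext i
      rw [Matrix.mulVec_single]
      simp [hQcol i]
    have hcolA' : ∀ i : Fin m, A' i.succ 0 = 0 := by
      have h1 : A' *ᵥ Pi.single 0 1 = μ • (Pi.single 0 1 : Fin (m+1) → ℂ) := by
        rw [hA', ← Matrix.mulVec_mulVec, ← Matrix.mulVec_mulVec, hQe, hAv,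
          Matrix.mulVec_smul, ← hQe, Matrix.mulVec_mulVec, hQQ', Matrix.one_mulVec]
      intro i
      have h2 := congrFun h1 i.succ
      rw [Matrix.mulVec_single] at h2
      simpa [Pi.single_eq_of_ne (Fin.succ_ne_zero i)] using h2
    have hcolB' : ∀ i : Fin m, B' i.succ 0 = 0 := by
      have h1 : B' *ᵥ Pi.single 0 1 = ν • (Pi.single 0 1 : Fin (m+1) → ℂ) := by
        rw [hB', ← Matrix.mulVec_mulVec, ← Matrix.mulVec_mulVec, hQe, hBv,
          Matrix.mulVec_smul, ← hQe, Matrix.mulVec_mulVec, hQQ', Matrix.one_mulVec]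
      intro i
      have h2 := congrFun h1 i.succ
      rw [Matrix.mulVec_single] at h2
      simpa [Pi.single_eq_of_ne (Fin.succ_ne_zero i)] using h2
    -- step 3: the deflated matrices
    set A₂ := A'.submatrix Fin.succ Fin.succ with hA₂
    set B₂ := B'.submatrix Fin.succ Fin.succ with hB₂
    have hconjmul : ∀ X Y : Matrix (Fin (m+1)) (Fin (m+1)) ℂ,
        (Q⁻¹ * X * Q) * (Q⁻¹ * Y * Q) = Q⁻¹ * (X * Y) * Q := by
      intro X Y
      have h5 : Q * (Q⁻¹ * (Y * Q)) = Y * Q := by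
        rw [← Matrix.mul_assoc, hQQ, Matrix.one_mul]
      calc (Q⁻¹ * X * Q) * (Q⁻¹ * Y * Q) = Q⁻¹ * (X * (Q * (Q⁻¹ * (Y * Q)))) := by
            simp only [Matrix.mul_assoc]
        _ = Q⁻¹ * (X * Y) * Q := by rw [h5]; simp only [Matrix.mul_assoc]
    have hconj : A' * B' - B' * A' = Q⁻¹ * (A * B - B * A) * Q := by
      rw [hA', hB', hconjmul A B, hconjmul B A, Matrix.mul_sub, Matrix.sub_mul]
    have hcomm₂ : A₂ * B₂ - B₂ * A₂ = (A' * B' - B' * A').submatrix Fin.succ Fin.succ := by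
      rw [hA₂, hB₂, mul_submatrix_succ _ _ hcolA', mul_submatrix_succ _ _ hcolB']
      ext i j
      simp [Matrix.submatrix_apply, Matrix.sub_apply]
    have hrank₂ : (A₂ * B₂ - B₂ * A₂).rank ≤ 1 := by
      rw [hcomm₂]
      refine le_trans (rank_submatrix_succ_le _) ?_
      rw [hconj]
      refine le_trans (Matrix.rank_mul_le_left _ _) ?_
      exact le_trans (Matrix.rank_mul_le_right _ _) hAB
    obtain ⟨R, hR, hRA, hRB⟩ := ihm A₂ B₂ hrank₂
    -- step 4: assemble
    refine ⟨Q * emb R, hQ.mul (isUnit_emb hR), ?_, ?_⟩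
    · have hP : (Q * emb R)⁻¹ * A * (Q * emb R) = emb R⁻¹ * A' * emb R := by
        rw [Matrix.mul_inv_rev, inv_emb hR, hA']
        simp only [Matrix.mul_assoc]
      rw [hP]
      exact tri_step A' R R⁻¹ hcolA' hRA
    · have hP : (Q * emb R)⁻¹ * B * (Q * emb R) = emb R⁻¹ * B' * emb R := by
        rw [Matrix.mul_inv_rev, inv_emb hR, hB']
        simp only [Matrix.mul_assoc]
      rw [hP]
      exact tri_step B' R R⁻¹ hcolB' hRB


end Laffey

end Laffey

theorem stmt_18 {n : ℕ} (A B : Matrix (Fin n) (Fin n) ℂ)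
    (h : (A * B - B * A).rank = 1) :
    ∃ P : Matrix (Fin n) (Fin n) ℂ, IsUnit P ∧
      (P⁻¹ * A * P).BlockTriangular id ∧ (P⁻¹ * B * P).BlockTriangular id :=
  Laffey.aux n A B (le_of_eq h)
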